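/- Let (H_t)_{t∈ℕ} be a non-negative supermartingale with respect to a filtration (F_t)_{t∈ℕ}, let N ∈ ℕ, let τ be a stopping time with τ ≤ N almost surely, and let c > 0. Then E[ Σ_{r=τ+1}^{N} 1{ H_{r−1} ≥ c } ] ≤ N · E[H_τ] / c, where the sum is taken to be 0 when τ = N. -/

import Mathlib

open MeasureTheory

/-- If `(H_t)` is a non-negative supermartingale, `τ ≤ N` a.s. is a stopping time and
`c > 0`, then `E[∑_{r=τ+1}^{N} 1{H_{r-1} ≥ c}] ≤ N · E[H_τ] / c` (the sum is empty when
`τ = N`). -/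
theorem stmt11 {Ω : Type*} {m : MeasurableSpace Ω} {μ : Measure Ω} [IsProbabilityMeasure μ]
    {ℱ : Filtration ℕ m} {H : ℕ → Ω → ℝ}
    (hH : Supermartingale H ℱ μ) (hnn : ∀ t, 0 ≤ᵐ[μ] H t)
    {N : ℕ} {τ : Ω → ℕ} (hτ : IsStoppingTime ℱ (fun ω => (τ ω : WithTop ℕ))) (hτN : ∀ᵐ ω ∂μ, τ ω ≤ N)
    {c : ℝ} (hc : 0 < c) :
    ∫ ω, (∑ r ∈ Finset.Ioc (τ ω) N, if c ≤ H (r - 1) ω then (1 : ℝ) else 0) ∂μ ≤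
      N * (∫ ω, H (τ ω) ω ∂μ) / c := by
  classical
  set τ' : Ω → ℕ := fun ω => min (τ ω) N with hτ'def
  have hτ'st : IsStoppingTime ℱ (fun ω => (τ' ω : WithTop ℕ)) := by
    have e : (fun ω => (τ' ω : WithTop ℕ)) = fun ω => min (τ ω : WithTop ℕ) (N : WithTop ℕ) := by
      funext ω; exact WithTop.coe_min _ _
    rw [e]; exact hτ.min_const N
  have hτ'le : ∀ ω, τ' ω ≤ N := fun ω => min_le_right _ _
  have hae : ∀ᵐ ω ∂μ, τ' ω = τ ω := hτN.mono fun ω h => min_eq_left h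
  have hnn' : ∀ᵐ ω ∂μ, ∀ n, 0 ≤ H n ω := ae_all_iff.2 hnn
  have intτ' : Integrable (stoppedValue H (fun ω => (τ' ω : WithTop ℕ))) μ :=
    integrable_stoppedValue ℕ hτ'st hH.integrable (fun ω => WithTop.coe_le_coe.mpr (hτ'le ω))
  -- the measurable sets {τ' ≤ s}
  have hmeas : ∀ s : ℕ, MeasurableSet {ω | τ' ω ≤ s} := fun s => by
    have := ℱ.le s _ (hτ'st s); simpa using this
  have intInd : ∀ s : ℕ, Integrable (Set.indicator {ω | τ' ω ≤ s} (H s)) μ :=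
    fun s => (hH.integrable s).indicator (hmeas s)
  -- key per-step bound
  have key : ∀ s ∈ Finset.range N,
      ∫ ω, Set.indicator {ω | τ' ω ≤ s} (H s) ω ∂μ ≤ ∫ ω, H (τ' ω) ω ∂μ := by
    intro s hs
    have hρ : IsStoppingTime ℱ (fun ω => ((max (τ' ω) s : ℕ) : WithTop ℕ)) := by
      have e : (fun ω => ((max (τ' ω) s : ℕ) : WithTop ℕ)) = fun ω => max (τ' ω : WithTop ℕ) (s : WithTop ℕ) := by
        funext ω; exact WithTop.coe_max _ _
      rw [e]; exact hτ'st.max_const s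
    have hρle : ∀ ω, max (τ' ω) s ≤ N :=
      fun ω => max_le (hτ'le ω) (Finset.mem_range.mp hs).le
    have intρ : Integrable (stoppedValue H fun ω => ((max (τ' ω) s : ℕ) : WithTop ℕ)) μ :=
      integrable_stoppedValue ℕ hρ hH.integrable (fun ω => WithTop.coe_le_coe.mpr (hρle ω))
    have h1 : ∫ ω, H (max (τ' ω) s) ω ∂μ ≤ ∫ ω, H (τ' ω) ω ∂μ := by
      have h2 := hH.neg.expected_stoppedValue_mono hτ'st hρ
        (fun ω => WithTop.coe_le_coe.mpr (le_max_left _ _)) (fun ω => WithTop.coe_le_coe.mpr (hρle ω))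
      simp only [stoppedValue, WithTop.untopA, WithTop.untopD_coe, Pi.neg_apply, integral_neg, neg_le_neg_iff] at h2
      exact h2
    refine le_trans (integral_mono_ae (intInd s) intρ ?_) h1
    filter_upwards [hnn'] with ω hω
    by_cases h : τ' ω ≤ s
    · simp [Set.indicator_of_mem, h, stoppedValue, WithTop.untopA, max_eq_right h]
      exact le_rfl
    · simp only [Set.indicator_of_notMem, h, Set.mem_setOf_eq, not_false_iff]
      exact hω _
  -- the dominating function
  set G : Ω → ℝ := fun ω => ∑ s ∈ Finset.range N, Set.indicator {ω | τ' ω ≤ s} (H s) ω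
    with hGdef
  have intG : Integrable G μ := integrable_finset_sum _ fun s _ => intInd s
  have hGle : ∫ ω, G ω ∂μ ≤ N * ∫ ω, H (τ' ω) ω ∂μ := by
    rw [hGdef, integral_finset_sum _ fun s _ => intInd s]
    calc ∑ s ∈ Finset.range N, ∫ ω, Set.indicator {ω | τ' ω ≤ s} (H s) ω ∂μ
        ≤ ∑ _s ∈ Finset.range N, ∫ ω, H (τ' ω) ω ∂μ := Finset.sum_le_sum key
      _ = N * ∫ ω, H (τ' ω) ω ∂μ := by simp [mul_comm]
  -- pointwise a.e. bound of the LHS integrand by c⁻¹ • G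
  have hpt : ∀ᵐ ω ∂μ,
      (∑ r ∈ Finset.Ioc (τ ω) N, if c ≤ H (r - 1) ω then (1 : ℝ) else 0)
        ≤ c⁻¹ * G ω := by
    filter_upwards [hnn', hae] with ω hω heq
    have hsum : (∑ r ∈ Finset.Ioc (τ ω) N, if c ≤ H (r - 1) ω then (1 : ℝ) else 0)
        = ∑ s ∈ Finset.Ico (τ' ω) N, if c ≤ H s ω then (1 : ℝ) else 0 := by
      rw [heq, ← Finset.Ico_add_one_add_one_eq_Ioc, Finset.sum_Ico_eq_sum_range,
        Finset.sum_Ico_eq_sum_range]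
      have hn : N + 1 - (τ ω + 1) = N - τ ω := by omega
      rw [hn]
      refine Finset.sum_congr rfl fun i _ => ?_
      have : τ ω + 1 + i - 1 = τ ω + i := by omega
      rw [this]
    have hGeq : G ω = ∑ s ∈ Finset.Ico (τ' ω) N, H s ω := by
      rw [hGdef]
      have : Finset.Ico (τ' ω) N = (Finset.range N).filter (fun s => τ' ω ≤ s) := by
        ext x
        simp only [Finset.mem_Ico, Finset.mem_filter, Finset.mem_range]
        omega
      rw [this, Finset.sum_filter]
      refine Finset.sum_congr rfl fun s _ => ?_
      by_cases h : τ' ω ≤ s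
      · simp [Set.indicator_of_mem, h]
      · simp [Set.indicator_of_notMem, h]
    rw [hsum, hGeq, Finset.mul_sum]
    refine Finset.sum_le_sum fun s _ => ?_
    by_cases h : c ≤ H s ω
    · simp only [h, if_true]
      rw [← div_self hc.ne', div_eq_inv_mul]
      exact mul_le_mul_of_nonneg_left h (inv_nonneg.mpr hc.le)
    · simp only [h, if_false]
      exact mul_nonneg (inv_nonneg.mpr hc.le) (hω s)
  have hnonneg : ∀ᵐ ω ∂μ,
      0 ≤ ∑ r ∈ Finset.Ioc (τ ω) N, if c ≤ H (r - 1) ω then (1 : ℝ) else 0 := by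
    filter_upwards with ω
    exact Finset.sum_nonneg fun r _ => by positivity
  have hmain : ∫ ω, (∑ r ∈ Finset.Ioc (τ ω) N, if c ≤ H (r - 1) ω then (1 : ℝ) else 0) ∂μ
      ≤ ∫ ω, c⁻¹ * G ω ∂μ :=
    integral_mono_of_nonneg hnonneg (intG.const_mul _) hpt
  have hτeq : ∫ ω, H (τ' ω) ω ∂μ = ∫ ω, H (τ ω) ω ∂μ :=
    integral_congr_ae (hae.mono fun ω h => congrFun (congrArg H h) ω)
  calc ∫ ω, (∑ r ∈ Finset.Ioc (τ ω) N, if c ≤ H (r - 1) ω then (1 : ℝ) else 0) ∂μ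
      ≤ ∫ ω, c⁻¹ * G ω ∂μ := hmain
    _ = c⁻¹ * ∫ ω, G ω ∂μ := integral_const_mul _ _
    _ ≤ c⁻¹ * (N * ∫ ω, H (τ' ω) ω ∂μ) :=
        mul_le_mul_of_nonneg_left hGle (inv_nonneg.mpr hc.le)
    _ = N * (∫ ω, H (τ ω) ω ∂μ) / c := by rw [hτeq]; ring
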